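/- Let P : ℝ → ℝ be continuously differentiable, λ ∈ ℝ, and φ : ℝ → ℝ twice continuously differentiable with φ''(x) = (P(x) − λ)·φ(x) for all x ∈ ℝ. Assume φ ∈ L²(ℝ) and φ' ∈ L²(ℝ); the functions x ↦ (P(x)−λ)·φ(x)² and x ↦ x·P'(x)·φ(x)² are integrable on ℝ; and the boundary terms vanish: φ(x)·φ'(x) → 0, x·(φ'(x))² → 0, and x·(P(x)−λ)·φ(x)² → 0 as x → +∞ and as x → −∞. Then 2·∫_ℝ (φ'(x))² dx = ∫_ℝ x·P'(x)·φ(x)² dx. -/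

import Mathlib

open MeasureTheory Filter

/-- The virial (Pohozaev-type) identity for the eigenvalue equation
`φ'' = (P − λ)φ`: testing against `φ` and `xφ'` and integrating by parts gives
`2∫(φ')² = ∫ x P' φ²`. -/
theorem virial_identity
    (P : ℝ → ℝ) (hP : ContDiff ℝ 1 P) (lam : ℝ)
    (φ : ℝ → ℝ) (hφ : ContDiff ℝ 2 φ)
    (heq : ∀ x : ℝ, deriv (deriv φ) x = (P x - lam) * φ x)
    (hφL2 : MemLp φ 2) (hφ'L2 : MemLp (deriv φ) 2)
    (hint1 : Integrable (fun x : ℝ => (P x - lam) * φ x ^ 2))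
    (hint2 : Integrable (fun x : ℝ => x * deriv P x * φ x ^ 2))
    (hb1t : Tendsto (fun x : ℝ => φ x * deriv φ x) atTop (nhds 0))
    (hb1b : Tendsto (fun x : ℝ => φ x * deriv φ x) atBot (nhds 0))
    (hb2t : Tendsto (fun x : ℝ => x * (deriv φ x) ^ 2) atTop (nhds 0))
    (hb2b : Tendsto (fun x : ℝ => x * (deriv φ x) ^ 2) atBot (nhds 0))
    (hb3t : Tendsto (fun x : ℝ => x * (P x - lam) * φ x ^ 2) atTop (nhds 0))
    (hb3b : Tendsto (fun x : ℝ => x * (P x - lam) * φ x ^ 2) atBot (nhds 0)) :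
    2 * ∫ x : ℝ, (deriv φ x) ^ 2 = ∫ x : ℝ, x * deriv P x * φ x ^ 2 := by
  -- differentiability facts
  have hφd : Differentiable ℝ φ := hφ.differentiable (by norm_num)
  have hφ'c : ContDiff ℝ 1 (deriv φ) := hφ.iterate_deriv' 1 1
  have hφ'd : Differentiable ℝ (deriv φ) := hφ'c.differentiable (by norm_num)
  have hPd : Differentiable ℝ P := hP.differentiable (by norm_num)
  -- the combined function F and its derivative
  set F : ℝ → ℝ := fun x =>
    x * (deriv φ x) ^ 2 - x * (P x - lam) * φ x ^ 2 + φ x * deriv φ x with hF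
  have hderiv : ∀ x : ℝ,
      HasDerivAt F (2 * (deriv φ x) ^ 2 - x * deriv P x * φ x ^ 2) x := by
    intro x
    have h1 : HasDerivAt (fun x => x * (deriv φ x) ^ 2)
        (1 * (deriv φ x) ^ 2 + x * (2 * deriv φ x ^ (2 - 1) * deriv (deriv φ) x)) x :=
      (hasDerivAt_id x).mul (((hφ'd x).hasDerivAt).pow 2)
    have h2 : HasDerivAt (fun x => x * (P x - lam) * φ x ^ 2) _ x := (((hasDerivAt_id x).mul (((hPd x).hasDerivAt).sub_const lam))).mul
        (((hφd x).hasDerivAt).pow 2)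
    have h3 : HasDerivAt (fun x => φ x * deriv φ x)
        (deriv φ x * deriv φ x + φ x * deriv (deriv φ) x) x :=
      ((hφd x).hasDerivAt).mul ((hφ'd x).hasDerivAt)
    have := (h1.sub h2).add h3
    refine this.congr_deriv ?_
    simp only [id_eq, Pi.mul_apply, heq x]
    ring
  -- integrability of the derivative
  have hintsq : Integrable (fun x : ℝ => (deriv φ x) ^ 2) := hφ'L2.integrable_sq
  have hintF : Integrable (fun x : ℝ => 2 * (deriv φ x) ^ 2 - x * deriv P x * φ x ^ 2) :=
    (hintsq.const_mul 2).sub hint2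
  -- limits of F at ±∞
  have htop : Tendsto F atTop (nhds 0) := by
    have := (hb2t.sub hb3t).add hb1t
    simpa using this
  have hbot : Tendsto F atBot (nhds 0) := by
    have := (hb2b.sub hb3b).add hb1b
    simpa using this
  have key := integral_of_hasDerivAt_of_tendsto hderiv hintF hbot htop
  rw [sub_zero] at key
  rw [integral_sub (hintsq.const_mul 2) hint2, integral_const_mul] at key
  linarith
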